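/- arXiv:2409.00498 — 2 statements merged into one kernel-verified Lean document; each statement's English description precedes it below -/
import Mathlib

section
/- Let f : ℝ^n × ℝ^m → ℝ^n, r : ℝ^n × ℝ^m → ℝ and Φ : ℝ^n → ℝ be continuously differentiable, and let T > 0 and x₀ ∈ ℝ^n. Suppose x : [0,T] × ℝ^m → ℝ^n is continuously differentiable and satisfies the controlled ODE ∂x/∂t (t,θ) = f(x(t,θ), θ) with x(0,θ) = x₀ for every control parameter θ ∈ ℝ^m. Fix θ ∈ ℝ^m and let p : [0,T] → ℝ^n be differentiable with ṗ(t) = −∇_x H(x(t,θ), p(t), θ) and terminal condition p(T) = −∇Φ(x(T,θ)), where H(x,p,θ) = ⟨p, f(x,θ)⟩ − r(x,θ) is the Hamiltonian. Then the cost functional J(θ) = Φ(x(T,θ)) + ∫₀ᵀ r(x(t,θ), θ) dt is differentiable at θ with gradient ∇J(θ) = −∫₀ᵀ ∇_θ H(x(t,θ), p(t,θ), θ) dt. -/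
set_option synthInstance.maxHeartbeats 1000000
set_option maxHeartbeats 4000000

open scoped RealInnerProductSpace
open Set MeasureTheory intervalIntegral InnerProductSpace

theorem my_param_integral {H E : Type*}
    [NormedAddCommGroup H] [NormedSpace ℝ H] [ProperSpace H]
    [NormedAddCommGroup E] [NormedSpace ℝ E]
    {a b : ℝ} (hab : a ≤ b) {G : ℝ → H → E} {G' : ℝ → H → H →L[ℝ] E} {θ : H}
    (hdiff : ∀ t ∈ Set.Icc a b, ∀ ϑ, HasFDerivAt (fun y => G t y) (G' t ϑ) ϑ)
    (hGc : ContinuousOn (fun q : ℝ × H => G q.1 q.2) (Set.Icc a b ×ˢ Set.univ))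
    (hG'c : ContinuousOn (fun q : ℝ × H => G' q.1 q.2) (Set.Icc a b ×ˢ Set.univ)) :
    HasFDerivAt (fun ϑ => ∫ t in a..b, G t ϑ) (∫ t in a..b, G' t θ) θ := by
  have hsub : ∀ ϑ : H, MapsTo (fun t => (t, ϑ)) (Set.Icc a b) (Set.Icc a b ×ˢ Set.univ) :=
    fun ϑ t ht => ⟨ht, mem_univ _⟩
  have hGslice : ∀ ϑ : H, ContinuousOn (fun t => G t ϑ) (Set.Icc a b) := fun ϑ =>
    hGc.comp (Continuous.continuousOn (by continuity)) (hsub ϑ)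
  have hG'slice : ContinuousOn (fun t => G' t θ) (Set.Icc a b) :=
    hG'c.comp (Continuous.continuousOn (by continuity)) (hsub θ)
  have hK : IsCompact (Set.Icc a b ×ˢ Metric.closedBall θ 1) :=
    isCompact_Icc.prod (isCompact_closedBall θ 1)
  obtain ⟨C, hC⟩ := hK.exists_bound_of_continuousOn
    (hG'c.mono (Set.prod_mono_right (subset_univ _)))
  have huIoc : Set.uIoc a b = Set.Ioc a b := Set.uIoc_of_le hab
  have huIcc : Set.uIcc a b = Set.Icc a b := Set.uIcc_of_le hab
  have hmeas : ∀ ϑ : H, AEStronglyMeasurable (fun t => G t ϑ)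
      (volume.restrict (Set.uIoc a b)) := by
    intro ϑ
    rw [huIoc]
    exact ((hGslice ϑ).mono Set.Ioc_subset_Icc_self).aestronglyMeasurable measurableSet_Ioc
  exact intervalIntegral.hasFDerivAt_integral_of_dominated_of_fderiv_le
    (F := fun ϑ t => G t ϑ) (F' := fun ϑ t => G' t ϑ) (bound := fun _ => C)
    (Metric.ball_mem_nhds θ one_pos)
    (Filter.Eventually.of_forall hmeas)
    (((huIcc ▸ hGslice θ) : ContinuousOn _ (Set.uIcc a b)).intervalIntegrable)
    (by
      rw [huIoc]
      exact (hG'slice.mono Set.Ioc_subset_Icc_self).aestronglyMeasurable measurableSet_Ioc)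
    (Filter.Eventually.of_forall fun t ht ϑ hϑ => by
      rw [huIoc] at ht
      exact hC (t, ϑ) ⟨Set.Ioc_subset_Icc_self ht, Metric.ball_subset_closedBall hϑ⟩)
    intervalIntegrable_const
    (Filter.Eventually.of_forall fun t ht ϑ _ => by
      rw [huIoc] at ht
      exact hdiff t (Set.Ioc_subset_Icc_self ht) ϑ)

/-- The Hamiltonian `H(x, p, θ) = ⟪p, f(x, θ)⟫ - r(x, θ)` of the control problem. -/
noncomputable def Ham {n m : ℕ}
    (f : EuclideanSpace ℝ (Fin n) → EuclideanSpace ℝ (Fin m) → EuclideanSpace ℝ (Fin n))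
    (r : EuclideanSpace ℝ (Fin n) → EuclideanSpace ℝ (Fin m) → ℝ)
    (x p : EuclideanSpace ℝ (Fin n)) (θ : EuclideanSpace ℝ (Fin m)) : ℝ :=
  ⟪p, f x θ⟫ - r x θ

/-- The gradient of the cost `J(θ) = Φ(x(T,θ)) + ∫₀ᵀ r(x(t,θ),θ) dt` equals
`-∫₀ᵀ ∇_θ H(x(t,θ), p(t), θ) dt`, where `p` solves the adjoint equation. -/
theorem gradient_cost_eq_neg_integral_gradHam {n m : ℕ}
    (f : EuclideanSpace ℝ (Fin n) → EuclideanSpace ℝ (Fin m) → EuclideanSpace ℝ (Fin n))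
    (r : EuclideanSpace ℝ (Fin n) → EuclideanSpace ℝ (Fin m) → ℝ)
    (Φ : EuclideanSpace ℝ (Fin n) → ℝ)
    (hf : ContDiff ℝ 1 (fun q : EuclideanSpace ℝ (Fin n) × EuclideanSpace ℝ (Fin m) => f q.1 q.2))
    (hr : ContDiff ℝ 1 (fun q : EuclideanSpace ℝ (Fin n) × EuclideanSpace ℝ (Fin m) => r q.1 q.2))
    (hΦ : ContDiff ℝ 1 Φ)
    (T : ℝ) (hT : 0 < T) (x₀ : EuclideanSpace ℝ (Fin n))
    (x : ℝ → EuclideanSpace ℝ (Fin m) → EuclideanSpace ℝ (Fin n))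
    (hx : ContDiffOn ℝ 1 (fun q : ℝ × EuclideanSpace ℝ (Fin m) => x q.1 q.2)
      (Set.Icc 0 T ×ˢ Set.univ))
    (hode : ∀ θ, ∀ t ∈ Set.Icc (0:ℝ) T,
      HasDerivWithinAt (fun s => x s θ) (f (x t θ) θ) (Set.Icc 0 T) t)
    (hinit : ∀ θ, x 0 θ = x₀)
    (θ : EuclideanSpace ℝ (Fin m))
    (p : ℝ → EuclideanSpace ℝ (Fin n))
    (hp : ∀ t ∈ Set.Icc (0:ℝ) T,
      HasDerivWithinAt p (-(gradient (fun y => Ham f r y (p t) θ) (x t θ))) (Set.Icc 0 T) t)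
    (hpT : p T = -(gradient Φ (x T θ))) :
    HasGradientAt (fun ϑ => Φ (x T ϑ) + ∫ t in (0:ℝ)..T, r (x t ϑ) ϑ)
      (-(∫ t in (0:ℝ)..T, gradient (fun ϑ => Ham f r (x t θ) (p t) ϑ) θ)) θ := by
  have hT' : (0:ℝ) ≤ T := hT.le
  set S : Set (ℝ × EuclideanSpace ℝ (Fin m)) := Set.Icc 0 T ×ˢ Set.univ with hSdef
  have hTmem : T ∈ Set.Icc (0:ℝ) T := ⟨hT', le_rfl⟩
  have h0mem : (0:ℝ) ∈ Set.Icc (0:ℝ) T := ⟨le_rfl, hT'⟩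
  have hUD : UniqueDiffOn ℝ S := (uniqueDiffOn_Icc hT).prod uniqueDiffOn_univ
  have hmemS : ∀ t ∈ Set.Icc (0:ℝ) T, ∀ ϑ : EuclideanSpace ℝ (Fin m), (t, ϑ) ∈ S :=
    fun t ht ϑ => ⟨ht, Set.mem_univ _⟩
  set X' : ℝ × EuclideanSpace ℝ (Fin m) →
      (ℝ × EuclideanSpace ℝ (Fin m) →L[ℝ] EuclideanSpace ℝ (Fin n)) :=
    fun q => fderivWithin ℝ (fun q : ℝ × EuclideanSpace ℝ (Fin m) => x q.1 q.2) S q with hX'def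
  set D : ℝ → EuclideanSpace ℝ (Fin m) →
      (EuclideanSpace ℝ (Fin m) →L[ℝ] EuclideanSpace ℝ (Fin n)) :=
    fun t ϑ => (X' (t, ϑ)).comp (ContinuousLinearMap.inr ℝ ℝ (EuclideanSpace ℝ (Fin m)))
    with hDdef
  set Df := fderiv ℝ (fun q : EuclideanSpace ℝ (Fin n) × EuclideanSpace ℝ (Fin m) => f q.1 q.2)
    with hDfdef
  set Dr := fderiv ℝ (fun q : EuclideanSpace ℝ (Fin n) × EuclideanSpace ℝ (Fin m) => r q.1 q.2)
    with hDrdef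
  set Ψ : ℝ → EuclideanSpace ℝ (Fin m) →
      (EuclideanSpace ℝ (Fin m) →L[ℝ] EuclideanSpace ℝ (Fin n) × EuclideanSpace ℝ (Fin m)) :=
    fun t ϑ => (D t ϑ).prod (ContinuousLinearMap.id ℝ (EuclideanSpace ℝ (Fin m))) with hΨdef
  set A : ℝ → EuclideanSpace ℝ (Fin m) →
      (EuclideanSpace ℝ (Fin m) →L[ℝ] EuclideanSpace ℝ (Fin n)) :=
    fun t ϑ => (Df (x t ϑ, ϑ)).comp (Ψ t ϑ) with hAdef
  set R' : ℝ → EuclideanSpace ℝ (Fin m) → (EuclideanSpace ℝ (Fin m) →L[ℝ] ℝ) :=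
    fun t ϑ => (Dr (x t ϑ, ϑ)).comp (Ψ t ϑ) with hR'def
  -- basic continuity
  have hXc : ContinuousOn (fun q : ℝ × EuclideanSpace ℝ (Fin m) => x q.1 q.2) S :=
    hx.continuousOn
  have hX'c : ContinuousOn X' S := hx.continuousOn_fderivWithin hUD le_rfl
  have hDc : ContinuousOn (fun q : ℝ × EuclideanSpace ℝ (Fin m) => D q.1 q.2) S :=
    hX'c.clm_comp continuousOn_const
  have hpairc : ContinuousOn
      (fun q : ℝ × EuclideanSpace ℝ (Fin m) =>
        ((x q.1 q.2, q.2) : EuclideanSpace ℝ (Fin n) × EuclideanSpace ℝ (Fin m))) S :=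
    hXc.prodMk continuous_snd.continuousOn
  have hΨc : ContinuousOn (fun q : ℝ × EuclideanSpace ℝ (Fin m) => Ψ q.1 q.2) S := by
    have heq : (fun q : ℝ × EuclideanSpace ℝ (Fin m) => Ψ q.1 q.2) = fun q =>
        ((ContinuousLinearMap.inl ℝ (EuclideanSpace ℝ (Fin n))
          (EuclideanSpace ℝ (Fin m))).comp (D q.1 q.2)) +
        (ContinuousLinearMap.inr ℝ (EuclideanSpace ℝ (Fin n)) (EuclideanSpace ℝ (Fin m))) := by
      funext q
      ext w
      · simp [hΨdef]
      · simp [hΨdef]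
    rw [heq]
    exact (ContinuousOn.clm_comp continuousOn_const hDc).add continuousOn_const
  have hAc : ContinuousOn (fun q : ℝ × EuclideanSpace ℝ (Fin m) => A q.1 q.2) S :=
    ContinuousOn.clm_comp (((hf.continuous_fderiv one_ne_zero).comp_continuousOn hpairc)) hΨc
  have hR'c : ContinuousOn (fun q : ℝ × EuclideanSpace ℝ (Fin m) => R' q.1 q.2) S :=
    ContinuousOn.clm_comp (((hr.continuous_fderiv one_ne_zero).comp_continuousOn hpairc)) hΨc
  -- slice derivatives in ϑ
  have hDx : ∀ t ∈ Set.Icc (0:ℝ) T, ∀ ϑ, HasFDerivAt (fun y => x t y) (D t ϑ) ϑ := by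
    intro t ht ϑ
    have h1 : HasFDerivWithinAt (fun q : ℝ × EuclideanSpace ℝ (Fin m) => x q.1 q.2)
        (X' (t, ϑ)) S (t, ϑ) :=
      (hx.differentiableOn one_ne_zero _ (hmemS t ht ϑ)).hasFDerivWithinAt
    have h2 : HasFDerivWithinAt (fun y : EuclideanSpace ℝ (Fin m) => ((t, y) : ℝ × _))
        (ContinuousLinearMap.inr ℝ ℝ (EuclideanSpace ℝ (Fin m))) Set.univ ϑ :=
      (hasFDerivAt_prodMk_right t ϑ).hasFDerivWithinAt
    have h3 := h1.comp ϑ h2 (fun y _ => hmemS t ht y)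
    rw [hasFDerivWithinAt_univ] at h3
    exact h3
  have hAx : ∀ t ∈ Set.Icc (0:ℝ) T, ∀ ϑ, HasFDerivAt (fun y => f (x t y) y) (A t ϑ) ϑ := by
    intro t ht ϑ
    have h1 : HasFDerivAt (fun y : EuclideanSpace ℝ (Fin m) =>
        ((x t y, y) : EuclideanSpace ℝ (Fin n) × EuclideanSpace ℝ (Fin m))) (Ψ t ϑ) ϑ :=
      (hDx t ht ϑ).prodMk (hasFDerivAt_id ϑ)
    have h2 : HasFDerivAt ((fun q : EuclideanSpace ℝ (Fin n) × EuclideanSpace ℝ (Fin m) =>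
        f q.1 q.2) ∘ (fun y => (x t y, y))) (A t ϑ) ϑ :=
      HasFDerivAt.comp ϑ ((hf.differentiable one_ne_zero (x t ϑ, ϑ)).hasFDerivAt) h1
    exact h2
  have hR'x : ∀ t ∈ Set.Icc (0:ℝ) T, ∀ ϑ, HasFDerivAt (fun y => r (x t y) y) (R' t ϑ) ϑ := by
    intro t ht ϑ
    have h1 : HasFDerivAt (fun y : EuclideanSpace ℝ (Fin m) =>
        ((x t y, y) : EuclideanSpace ℝ (Fin n) × EuclideanSpace ℝ (Fin m))) (Ψ t ϑ) ϑ :=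
      (hDx t ht ϑ).prodMk (hasFDerivAt_id ϑ)
    have h2 : HasFDerivAt ((fun q : EuclideanSpace ℝ (Fin n) × EuclideanSpace ℝ (Fin m) =>
        r q.1 q.2) ∘ (fun y => (x t y, y))) (R' t ϑ) ϑ :=
      HasFDerivAt.comp ϑ ((hr.differentiable one_ne_zero (x t ϑ, ϑ)).hasFDerivAt) h1
    exact h2
  -- continuity of the integrands
  have hrc : ContinuousOn (fun q : ℝ × EuclideanSpace ℝ (Fin m) => r (x q.1 q.2) q.2) S :=
    hr.continuous.comp_continuousOn hpairc
  have hfc : ContinuousOn (fun q : ℝ × EuclideanSpace ℝ (Fin m) => f (x q.1 q.2) q.2) S :=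
    hf.continuous.comp_continuousOn hpairc
  -- derivative of the cost
  have hL2 : HasFDerivAt (fun ϑ => ∫ t in (0:ℝ)..T, r (x t ϑ) ϑ)
      (∫ t in (0:ℝ)..T, R' t θ) θ :=
    my_param_integral hT' hR'x hrc hR'c
  have hL1 : HasFDerivAt (fun ϑ => Φ (x T ϑ)) ((fderiv ℝ Φ (x T θ)).comp (D T θ)) θ :=
    ((hΦ.differentiable one_ne_zero (x T θ)).hasFDerivAt).comp θ (hDx T hTmem θ)
  have hJ : HasFDerivAt (fun ϑ => Φ (x T ϑ) + ∫ t in (0:ℝ)..T, r (x t ϑ) ϑ)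
      ((fderiv ℝ Φ (x T θ)).comp (D T θ) + ∫ t in (0:ℝ)..T, R' t θ) θ := hL1.add hL2
  -- integral representation of x
  have hxcont : ∀ ϑ, ContinuousOn (fun s => x s ϑ) (Set.Icc 0 T) := by
    intro ϑ s hs
    exact (hode ϑ s hs).continuousWithinAt
  have hrep : ∀ ϑ, ∀ t ∈ Set.Icc (0:ℝ) T, ∫ s in (0:ℝ)..t, f (x s ϑ) ϑ = x t ϑ - x₀ := by
    intro ϑ t ht
    have hIcc : Set.Icc (0:ℝ) t ⊆ Set.Icc (0:ℝ) T := Set.Icc_subset_Icc le_rfl ht.2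
    have h := intervalIntegral.integral_eq_sub_of_hasDeriv_right_of_le ht.1
      ((hxcont ϑ).mono hIcc)
      (fun s hs => ((hode ϑ s ⟨hs.1.le, hs.2.le.trans ht.2⟩).hasDerivAt
        (Icc_mem_nhds hs.1 (lt_of_lt_of_le hs.2 ht.2))).hasDerivWithinAt)
      (((hf.continuous.comp_continuousOn
        (((hxcont ϑ).mono hIcc).prodMk continuousOn_const)).mono
          (by rw [Set.uIcc_of_le ht.1])).intervalIntegrable)
    rw [h, hinit ϑ]
  -- the variational representation of D
  have hDeq : ∀ t ∈ Set.Icc (0:ℝ) T, D t θ = ∫ s in (0:ℝ)..t, A s θ := by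
    intro t ht
    have hsub' : Set.Icc (0:ℝ) t ⊆ Set.Icc (0:ℝ) T := Set.Icc_subset_Icc le_rfl ht.2
    have hprodsub : Set.Icc (0:ℝ) t ×ˢ (Set.univ : Set (EuclideanSpace ℝ (Fin m))) ⊆ S :=
      Set.prod_mono_left hsub'
    have h1 : HasFDerivAt (fun ϑ' => ∫ s in (0:ℝ)..t, f (x s ϑ') ϑ')
        (∫ s in (0:ℝ)..t, A s θ) θ :=
      my_param_integral ht.1 (fun s hs ϑ => hAx s (hsub' hs) ϑ)
        (hfc.mono hprodsub) (hAc.mono hprodsub)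
    have h2 : HasFDerivAt (fun ϑ' => x t ϑ') (∫ s in (0:ℝ)..t, A s θ) θ := by
      have heq : (fun ϑ' => x₀ + ∫ s in (0:ℝ)..t, f (x s ϑ') ϑ') = fun ϑ' => x t ϑ' :=
        funext fun ϑ' => by rw [hrep ϑ' t ht]; abel
      have h3 := h1.const_add x₀
      rwa [heq] at h3
    exact (hDx t ht θ).unique h2
  have hD0 : D 0 θ = 0 := by
    have h1 : HasFDerivAt (fun y => x 0 y) (0 :
        EuclideanSpace ℝ (Fin m) →L[ℝ] EuclideanSpace ℝ (Fin n)) θ := by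
      have : (fun y => x 0 y) = fun _ => x₀ := funext fun y => hinit y
      rw [this]
      exact hasFDerivAt_const x₀ θ
    exact (hDx 0 h0mem θ).unique h1
  -- θ-slice continuity
  have hsliceθ : MapsTo (fun t : ℝ => (t, θ)) (Set.Icc (0:ℝ) T) S := fun t ht => hmemS t ht θ
  have hAθc : ContinuousOn (fun s => A s θ) (Set.Icc (0:ℝ) T) :=
    hAc.comp (Continuous.continuousOn (by continuity)) hsliceθ
  have hR'θc : ContinuousOn (fun s => R' s θ) (Set.Icc (0:ℝ) T) :=
    hR'c.comp (Continuous.continuousOn (by continuity)) hsliceθ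
  have hDθc : ContinuousOn (fun t => D t θ) (Set.Icc (0:ℝ) T) :=
    hDc.comp (Continuous.continuousOn (by continuity)) hsliceθ
  have hpc : ContinuousOn p (Set.Icc (0:ℝ) T) := fun t ht => (hp t ht).continuousWithinAt
  have hxθc : ContinuousOn (fun t => x t θ) (Set.Icc (0:ℝ) T) := hxcont θ
  -- partial derivative operators along the trajectory
  set fx : ℝ → (EuclideanSpace ℝ (Fin n) →L[ℝ] EuclideanSpace ℝ (Fin n)) :=
    fun t => (Df (x t θ, θ)).comp
      (ContinuousLinearMap.inl ℝ (EuclideanSpace ℝ (Fin n)) (EuclideanSpace ℝ (Fin m)))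
    with hfxdef
  set fθ : ℝ → (EuclideanSpace ℝ (Fin m) →L[ℝ] EuclideanSpace ℝ (Fin n)) :=
    fun t => (Df (x t θ, θ)).comp
      (ContinuousLinearMap.inr ℝ (EuclideanSpace ℝ (Fin n)) (EuclideanSpace ℝ (Fin m)))
    with hfθdef
  set rx : ℝ → (EuclideanSpace ℝ (Fin n) →L[ℝ] ℝ) :=
    fun t => (Dr (x t θ, θ)).comp
      (ContinuousLinearMap.inl ℝ (EuclideanSpace ℝ (Fin n)) (EuclideanSpace ℝ (Fin m)))
    with hrxdef
  set rθ : ℝ → (EuclideanSpace ℝ (Fin m) →L[ℝ] ℝ) :=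
    fun t => (Dr (x t θ, θ)).comp
      (ContinuousLinearMap.inr ℝ (EuclideanSpace ℝ (Fin n)) (EuclideanSpace ℝ (Fin m)))
    with hrθdef
  have hDfθc : ContinuousOn (fun t => Df (x t θ, θ)) (Set.Icc (0:ℝ) T) :=
    (hf.continuous_fderiv one_ne_zero).comp_continuousOn (hxθc.prodMk continuousOn_const)
  have hDrθc : ContinuousOn (fun t => Dr (x t θ, θ)) (Set.Icc (0:ℝ) T) :=
    (hr.continuous_fderiv one_ne_zero).comp_continuousOn (hxθc.prodMk continuousOn_const)
  have hfxc : ContinuousOn fx (Set.Icc (0:ℝ) T) := hDfθc.clm_comp continuousOn_const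
  have hfθc : ContinuousOn fθ (Set.Icc (0:ℝ) T) := hDfθc.clm_comp continuousOn_const
  have hrxc : ContinuousOn rx (Set.Icc (0:ℝ) T) := hDrθc.clm_comp continuousOn_const
  have hrθc : ContinuousOn rθ (Set.Icc (0:ℝ) T) := hDrθc.clm_comp continuousOn_const
  -- gradient identities
  have hGradY : ∀ t ∈ Set.Icc (0:ℝ) T, ∀ u : EuclideanSpace ℝ (Fin n),
      ⟪gradient (fun y => Ham f r y (p t) θ) (x t θ), u⟫ = ⟪p t, fx t u⟫ - rx t u := by
    intro t ht u
    have hfy : HasFDerivAt (fun y => f y θ) (fx t) (x t θ) := by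
      have h1 : HasFDerivAt ((fun q : EuclideanSpace ℝ (Fin n) × EuclideanSpace ℝ (Fin m) =>
          f q.1 q.2) ∘ (fun y => (y, θ))) (fx t) (x t θ) :=
        HasFDerivAt.comp _ ((hf.differentiable one_ne_zero (x t θ, θ)).hasFDerivAt)
          (hasFDerivAt_prodMk_left (x t θ) θ)
      exact h1
    have hry : HasFDerivAt (fun y => r y θ) (rx t) (x t θ) := by
      have h1 : HasFDerivAt ((fun q : EuclideanSpace ℝ (Fin n) × EuclideanSpace ℝ (Fin m) =>
          r q.1 q.2) ∘ (fun y => (y, θ))) (rx t) (x t θ) :=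
        HasFDerivAt.comp _ ((hr.differentiable one_ne_zero (x t θ, θ)).hasFDerivAt)
          (hasFDerivAt_prodMk_left (x t θ) θ)
      exact h1
    have hinner : HasFDerivAt (fun y => ⟪p t, f y θ⟫)
        ((innerSL ℝ (p t)).comp (fx t)) (x t θ) := by
      have h1 : HasFDerivAt ((innerSL ℝ (p t)) ∘ (fun y => f y θ))
          ((innerSL ℝ (p t)).comp (fx t)) (x t θ) :=
        HasFDerivAt.comp _ ((innerSL ℝ (p t)).hasFDerivAt) hfy
      have h2 : (fun y => ⟪p t, f y θ⟫) = ((innerSL ℝ (p t)) ∘ (fun y => f y θ)) := by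
        funext y; simp
      rw [h2]; exact h1
    have hH : HasFDerivAt (fun y => Ham f r y (p t) θ)
        ((innerSL ℝ (p t)).comp (fx t) - rx t) (x t θ) := by
      have := hinner.sub hry
      exact this
    rw [gradient, hH.fderiv, InnerProductSpace.toDual_symm_apply]
    simp
  have hHθ : ∀ t ∈ Set.Icc (0:ℝ) T, HasFDerivAt (fun ϑ' => Ham f r (x t θ) (p t) ϑ')
      ((innerSL ℝ (p t)).comp (fθ t) - rθ t) θ := by
    intro t ht
    have hfy : HasFDerivAt (fun ϑ' => f (x t θ) ϑ') (fθ t) θ := by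
      have h1 : HasFDerivAt ((fun q : EuclideanSpace ℝ (Fin n) × EuclideanSpace ℝ (Fin m) =>
          f q.1 q.2) ∘ (fun ϑ' => (x t θ, ϑ'))) (fθ t) θ :=
        HasFDerivAt.comp _ ((hf.differentiable one_ne_zero (x t θ, θ)).hasFDerivAt)
          (hasFDerivAt_prodMk_right (x t θ) θ)
      exact h1
    have hry : HasFDerivAt (fun ϑ' => r (x t θ) ϑ') (rθ t) θ := by
      have h1 : HasFDerivAt ((fun q : EuclideanSpace ℝ (Fin n) × EuclideanSpace ℝ (Fin m) =>
          r q.1 q.2) ∘ (fun ϑ' => (x t θ, ϑ'))) (rθ t) θ :=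
        HasFDerivAt.comp _ ((hr.differentiable one_ne_zero (x t θ, θ)).hasFDerivAt)
          (hasFDerivAt_prodMk_right (x t θ) θ)
      exact h1
    have hinner : HasFDerivAt (fun ϑ' => ⟪p t, f (x t θ) ϑ'⟫)
        ((innerSL ℝ (p t)).comp (fθ t)) θ := by
      have h1 : HasFDerivAt ((innerSL ℝ (p t)) ∘ (fun ϑ' => f (x t θ) ϑ'))
          ((innerSL ℝ (p t)).comp (fθ t)) θ :=
        HasFDerivAt.comp _ ((innerSL ℝ (p t)).hasFDerivAt) hfy
      have h2 : (fun ϑ' => ⟪p t, f (x t θ) ϑ'⟫)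
          = ((innerSL ℝ (p t)) ∘ (fun ϑ' => f (x t θ) ϑ')) := by
        funext y; simp
      rw [h2]; exact h1
    have h3 := hinner.sub hry
    exact h3
  have hGradθ : ∀ t ∈ Set.Icc (0:ℝ) T, ∀ u : EuclideanSpace ℝ (Fin m),
      ⟪gradient (fun ϑ' => Ham f r (x t θ) (p t) ϑ') θ, u⟫ = ⟪p t, fθ t u⟫ - rθ t u := by
    intro t ht u
    rw [gradient, (hHθ t ht).fderiv, InnerProductSpace.toDual_symm_apply]
    simp
  -- continuity and integrability of the θ-gradient of the Hamiltonian
  have hGθeq : ∀ t ∈ Set.Icc (0:ℝ) T,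
      gradient (fun ϑ' => Ham f r (x t θ) (p t) ϑ') θ
        = (InnerProductSpace.toDual ℝ (EuclideanSpace ℝ (Fin m))).symm
            ((innerSL ℝ (p t)).comp (fθ t) - rθ t) := by
    intro t ht
    rw [gradient, (hHθ t ht).fderiv]
  have hGθc : ContinuousOn
      (fun t => gradient (fun ϑ' => Ham f r (x t θ) (p t) ϑ') θ) (Set.Icc (0:ℝ) T) := by
    have hcont : ContinuousOn (fun t =>
        (InnerProductSpace.toDual ℝ (EuclideanSpace ℝ (Fin m))).symm
          ((innerSL ℝ (p t)).comp (fθ t) - rθ t)) (Set.Icc (0:ℝ) T) :=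
      Continuous.comp_continuousOn (LinearIsometryEquiv.continuous _)
        ((ContinuousOn.clm_comp ((innerSL ℝ).continuous.comp_continuousOn hpc) hfθc).sub hrθc)
    exact hcont.congr hGθeq
  have hGθint : IntervalIntegrable
      (fun t => gradient (fun ϑ' => Ham f r (x t θ) (p t) ϑ') θ) volume 0 T :=
    (hGθc.mono (by rw [Set.uIcc_of_le hT'])).intervalIntegrable
  -- decompositions of A and R' applied to a vector
  have hAdecomp : ∀ t, ∀ w : EuclideanSpace ℝ (Fin m),
      A t θ w = fx t (D t θ w) + fθ t w := by
    intro t w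
    have h1 : ((D t θ w, w) : EuclideanSpace ℝ (Fin n) × EuclideanSpace ℝ (Fin m))
        = (D t θ w, 0) + (0, w) := by simp
    calc A t θ w = Df (x t θ, θ) (D t θ w, w) := by simp [hAdef, hΨdef]
      _ = Df (x t θ, θ) ((D t θ w, 0) + (0, w)) := by rw [← h1]
      _ = fx t (D t θ w) + fθ t w := by rw [map_add]; simp [hfxdef, hfθdef]
  have hR'decomp : ∀ t, ∀ w : EuclideanSpace ℝ (Fin m),
      R' t θ w = rx t (D t θ w) + rθ t w := by
    intro t w
    have h1 : ((D t θ w, w) : EuclideanSpace ℝ (Fin n) × EuclideanSpace ℝ (Fin m))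
        = (D t θ w, 0) + (0, w) := by simp
    calc R' t θ w = Dr (x t θ, θ) (D t θ w, w) := by simp [hR'def, hΨdef]
      _ = Dr (x t θ, θ) ((D t θ w, 0) + (0, w)) := by rw [← h1]
      _ = rx t (D t θ w) + rθ t w := by rw [map_add]; simp [hrxdef, hrθdef]
  -- the key pointwise identity for the derivative
  have hkey : ∀ w : EuclideanSpace ℝ (Fin m),
      ((fderiv ℝ Φ (x T θ)).comp (D T θ) + ∫ t in (0:ℝ)..T, R' t θ) w
        = ⟪-(∫ t in (0:ℝ)..T, gradient (fun ϑ' => Ham f r (x t θ) (p t) ϑ') θ), w⟫ := by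
    intro w
    set v : ℝ → EuclideanSpace ℝ (Fin n) := fun t => D t θ w with hvdef
    have hvc : ContinuousOn v (Set.Icc (0:ℝ) T) := hDθc.clm_apply continuousOn_const
    have hκc : ContinuousOn (fun s => A s θ w) (Set.Icc (0:ℝ) T) :=
      hAθc.clm_apply continuousOn_const
    -- v is differentiable with derivative A · w
    set u : ℝ → EuclideanSpace ℝ (Fin n) :=
      Set.IccExtend hT' (fun s : Set.Icc (0:ℝ) T => A (s : ℝ) θ w) with hudef
    have hu : Continuous u :=
      Continuous.Icc_extend' (continuousOn_iff_continuous_restrict.mp hκc)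
    have hueq : ∀ s ∈ Set.Icc (0:ℝ) T, u s = A s θ w := fun s hs => by
      rw [hudef, Set.IccExtend_of_mem hT' _ hs]
    have hveq : ∀ τ ∈ Set.Icc (0:ℝ) T, v τ = ∫ s in (0:ℝ)..τ, u s := by
      intro τ hτ
      have hAint : IntervalIntegrable (fun s => A s θ) volume 0 τ :=
        ContinuousOn.intervalIntegrable (by
          rw [Set.uIcc_of_le hτ.1]
          exact hAθc.mono (Set.Icc_subset_Icc le_rfl hτ.2))
      have h1 : v τ = (∫ s in (0:ℝ)..τ, A s θ) w := by rw [hvdef]; simp [hDeq τ hτ]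
      rw [h1, ContinuousLinearMap.intervalIntegral_apply hAint w]
      apply intervalIntegral.integral_congr
      intro s hs
      rw [Set.uIcc_of_le hτ.1] at hs
      exact (hueq s (Set.Icc_subset_Icc le_rfl hτ.2 hs)).symm
    have hv' : ∀ t ∈ Set.Icc (0:ℝ) T, HasDerivWithinAt v (A t θ w) (Set.Icc (0:ℝ) T) t := by
      intro t ht
      have hF : HasDerivWithinAt (fun τ => ∫ s in (0:ℝ)..τ, u s) (u t) (Set.Icc (0:ℝ) T) t :=
        (hu.integral_hasStrictDerivAt 0 t).hasDerivAt.hasDerivWithinAt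
      have hfin := hF.congr hveq (hveq t ht)
      rwa [hueq t ht] at hfin
    -- the adjoint computation
    set g : ℝ → ℝ := fun t => ⟪p t, v t⟫ with hgdef
    set G : ℝ → ℝ := fun t => rx t (v t) + ⟪p t, fθ t w⟫ with hGdef
    have hg' : ∀ t ∈ Set.Icc (0:ℝ) T, HasDerivWithinAt g (G t) (Set.Icc (0:ℝ) T) t := by
      intro t ht
      have h1 := HasDerivWithinAt.inner ℝ (hp t ht) (hv' t ht)
      have h2 : ⟪p t, A t θ w⟫ + ⟪-(gradient (fun y => Ham f r y (p t) θ) (x t θ)), v t⟫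
          = G t := by
        rw [inner_neg_left, hGradY t ht (v t), hAdecomp t w, inner_add_right, hGdef]
        ring
      rw [← h2]
      exact h1
    have hgc : ContinuousOn g (Set.Icc (0:ℝ) T) := ContinuousOn.inner hpc hvc
    have hGcont : ContinuousOn G (Set.Icc (0:ℝ) T) :=
      (hrxc.clm_apply hvc).add (ContinuousOn.inner hpc (hfθc.clm_apply continuousOn_const))
    have hGint : IntervalIntegrable G volume 0 T :=
      (hGcont.mono (by rw [Set.uIcc_of_le hT'])).intervalIntegrable
    have hFTC : ∫ t in (0:ℝ)..T, G t = g T - g 0 :=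
      intervalIntegral.integral_eq_sub_of_hasDeriv_right_of_le hT' hgc
        (fun t ht => ((hg' t ⟨ht.1.le, ht.2.le⟩).hasDerivAt
          (Icc_mem_nhds ht.1 ht.2)).hasDerivWithinAt) hGint
    have hg0 : g 0 = 0 := by
      have : v 0 = 0 := by rw [hvdef]; simp [hD0]
      rw [hgdef]; simp [this]
    have hgT : g T = -(fderiv ℝ Φ (x T θ) (v T)) := by
      rw [hgdef]
      simp only [hpT, inner_neg_left, neg_inj]
      rw [gradient, InnerProductSpace.toDual_symm_apply]
    have hΦval : fderiv ℝ Φ (x T θ) (v T) = -(∫ t in (0:ℝ)..T, G t) := by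
      rw [hFTC, hg0, hgT]; ring
    -- compute the left side
    have hR'int : IntervalIntegrable (fun t => R' t θ) volume 0 T :=
      (hR'θc.mono (by rw [Set.uIcc_of_le hT'])).intervalIntegrable
    have happly : (∫ t in (0:ℝ)..T, R' t θ) w = ∫ t in (0:ℝ)..T, R' t θ w :=
      ContinuousLinearMap.intervalIntegral_apply hR'int w
    have hR'w_int : IntervalIntegrable (fun t => R' t θ w) volume 0 T :=
      ((hR'θc.clm_apply continuousOn_const).mono
        (by rw [Set.uIcc_of_le hT'])).intervalIntegrable
    have hLHS : ((fderiv ℝ Φ (x T θ)).comp (D T θ) + ∫ t in (0:ℝ)..T, R' t θ) w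
        = ∫ t in (0:ℝ)..T, (rθ t w - ⟪p t, fθ t w⟫) := by
      have hdiffint : IntervalIntegrable (fun t => rθ t w - ⟪p t, fθ t w⟫) volume 0 T :=
        ContinuousOn.intervalIntegrable (by
          rw [Set.uIcc_of_le hT']
          exact (hrθc.clm_apply continuousOn_const).sub
            (ContinuousOn.inner hpc (hfθc.clm_apply continuousOn_const)))
      have e1 : ((fderiv ℝ Φ (x T θ)).comp (D T θ) + ∫ t in (0:ℝ)..T, R' t θ) w
          = fderiv ℝ Φ (x T θ) (v T) + ∫ t in (0:ℝ)..T, R' t θ w := by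
        rw [ContinuousLinearMap.add_apply, ContinuousLinearMap.comp_apply, happly]
      have e2 : ∀ t ∈ Set.uIcc (0:ℝ) T, R' t θ w = G t + (rθ t w - ⟪p t, fθ t w⟫) := by
        intro t ht'
        rw [hR'decomp t w]
        simp only [hGdef, hvdef]
        ring
      rw [e1, hΦval, intervalIntegral.integral_congr e2,
        intervalIntegral.integral_add hGint hdiffint]
      ring
    -- compute the right side
    have hRHS : ⟪-(∫ t in (0:ℝ)..T, gradient (fun ϑ' => Ham f r (x t θ) (p t) ϑ') θ), w⟫
        = ∫ t in (0:ℝ)..T, (rθ t w - ⟪p t, fθ t w⟫) := by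
      have e3 : ⟪∫ t in (0:ℝ)..T, gradient (fun ϑ' => Ham f r (x t θ) (p t) ϑ') θ, w⟫
          = ∫ t in (0:ℝ)..T, ⟪gradient (fun ϑ' => Ham f r (x t θ) (p t) ϑ') θ, w⟫ := by
        calc ⟪∫ t in (0:ℝ)..T, gradient (fun ϑ' => Ham f r (x t θ) (p t) ϑ') θ, w⟫
            = (innerSL ℝ w) (∫ t in (0:ℝ)..T,
                gradient (fun ϑ' => Ham f r (x t θ) (p t) ϑ') θ) := by
              rw [real_inner_comm, innerSL_apply_apply]
          _ = ∫ t in (0:ℝ)..T,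
                (innerSL ℝ w) (gradient (fun ϑ' => Ham f r (x t θ) (p t) ϑ') θ) :=
              ((innerSL ℝ w).intervalIntegral_comp_comm hGθint).symm
          _ = ∫ t in (0:ℝ)..T, ⟪gradient (fun ϑ' => Ham f r (x t θ) (p t) ϑ') θ, w⟫ := by
              apply intervalIntegral.integral_congr
              intro t ht
              show (innerSL ℝ w) (gradient (fun ϑ' => Ham f r (x t θ) (p t) ϑ') θ)
                = ⟪gradient (fun ϑ' => Ham f r (x t θ) (p t) ϑ') θ, w⟫
              rw [innerSL_apply_apply]
              exact real_inner_comm _ _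
      rw [inner_neg_left, e3, ← intervalIntegral.integral_neg]
      apply intervalIntegral.integral_congr
      intro t ht
      rw [Set.uIcc_of_le hT'] at ht
      show -⟪gradient (fun ϑ' => Ham f r (x t θ) (p t) ϑ') θ, w⟫ = rθ t w - ⟪p t, fθ t w⟫
      rw [hGradθ t ht w]
      ring
    rw [hLHS, hRHS]
  -- conclusion
  have hfinal : (InnerProductSpace.toDual ℝ (EuclideanSpace ℝ (Fin m)))
      (-(∫ t in (0:ℝ)..T, gradient (fun ϑ' => Ham f r (x t θ) (p t) ϑ') θ))
      = (fderiv ℝ Φ (x T θ)).comp (D T θ) + ∫ t in (0:ℝ)..T, R' t θ := by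
    ext w
    rw [InnerProductSpace.toDual_apply_apply]
    exact (hkey w).symm
  rw [hasGradientAt_iff_hasFDerivAt, hfinal]
  exact hJ
end

section
/- Let f : ℝ^n × ℝ^m → ℝ^n and Φ : ℝ^n → ℝ be continuously differentiable, let τ > 0, x₀ ∈ ℝ^n and T ∈ ℕ. For θ ∈ ℝ^m define the discrete trajectory x_0(θ) = x₀ and x_{t+1}(θ) = x_t(θ) + τ f(x_t(θ), θ) for t = 0, …, T−1. Fix θ and define the discrete co-state by p_T = −∇Φ(x_T(θ)) and p_t = p_{t+1} + τ (D_x f(x_t(θ), θ))* p_{t+1} for t = T−1, …, 0, where (D_x f)* denotes the adjoint of the Jacobian of f in its first argument. Then the map θ ↦ Φ(x_T(θ)) is differentiable at θ and its gradient equals −τ ∑_{t=0}^{T−1} (D_θ f(x_t(θ), θ))* p_{t+1}, where (D_θ f)* is the adjoint of the Jacobian of f in its second argument. -/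
/-- The explicit Euler trajectory `x₀, x_{t+1} = x_t + τ f(x_t, θ)`. -/
noncomputable def eulerTraj {n m : ℕ}
    (f : EuclideanSpace ℝ (Fin n) → EuclideanSpace ℝ (Fin m) → EuclideanSpace ℝ (Fin n))
    (τ : ℝ) (x₀ : EuclideanSpace ℝ (Fin n)) (θ : EuclideanSpace ℝ (Fin m)) : ℕ → EuclideanSpace ℝ (Fin n)
  | 0 => x₀
  | (t + 1) => eulerTraj f τ x₀ θ t + τ • f (eulerTraj f τ x₀ θ t) θ

/-- The derivative of the Euler trajectory with respect to the parameter. -/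
noncomputable def trajDeriv {n m : ℕ}
    (f : EuclideanSpace ℝ (Fin n) → EuclideanSpace ℝ (Fin m) → EuclideanSpace ℝ (Fin n))
    (τ : ℝ) (x₀ : EuclideanSpace ℝ (Fin n)) (θ : EuclideanSpace ℝ (Fin m)) :
    ℕ → (EuclideanSpace ℝ (Fin m) →L[ℝ] EuclideanSpace ℝ (Fin n))
  | 0 => 0
  | (t + 1) => trajDeriv f τ x₀ θ t +
      τ • ((fderiv ℝ (fun q : EuclideanSpace ℝ (Fin n) × EuclideanSpace ℝ (Fin m) => f q.1 q.2)
        (eulerTraj f τ x₀ θ t, θ)).comp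
        ((trajDeriv f τ x₀ θ t).prod (ContinuousLinearMap.id ℝ _)))

private theorem hasFDerivAt_comp_aux
    {E G H : Type*} [NormedAddCommGroup E] [NormedSpace ℝ E]
    [NormedAddCommGroup G] [NormedSpace ℝ G] [NormedAddCommGroup H] [NormedSpace ℝ H]
    {φ : E → G} {g : G → H} {φ' : E →L[ℝ] G} {g' : G →L[ℝ] H} {x : E}
    (hφ : HasFDerivAt φ φ' x) (hg : HasFDerivAt g g' (φ x)) :
    HasFDerivAt (fun y => g (φ y)) (g'.comp φ') x :=
  hg.comp x hφ

theorem hasFDerivAt_eulerTraj {n m : ℕ}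
    (f : EuclideanSpace ℝ (Fin n) → EuclideanSpace ℝ (Fin m) → EuclideanSpace ℝ (Fin n))
    (hf : ContDiff ℝ 1 (fun q : EuclideanSpace ℝ (Fin n) × EuclideanSpace ℝ (Fin m) => f q.1 q.2))
    (τ : ℝ) (x₀ : EuclideanSpace ℝ (Fin n)) (θ : EuclideanSpace ℝ (Fin m)) (t : ℕ) :
    HasFDerivAt (fun ϑ => eulerTraj f τ x₀ ϑ t) (trajDeriv f τ x₀ θ t) θ := by
  induction t with
  | zero => exact hasFDerivAt_const x₀ θ
  | succ t ih =>
    have hF := ((hf.differentiable one_ne_zero) (eulerTraj f τ x₀ θ t, θ)).hasFDerivAt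
    have hpair : HasFDerivAt (fun ϑ => (eulerTraj f τ x₀ ϑ t, ϑ))
        ((trajDeriv f τ x₀ θ t).prod (ContinuousLinearMap.id ℝ _)) θ :=
      ih.prodMk (hasFDerivAt_id θ)
    have hcomp := hasFDerivAt_comp_aux hpair hF
    exact ih.add (hcomp.const_smul τ)

/-- Back-propagation through the explicit Euler scheme: the gradient of the terminal cost
`θ ↦ Φ(x_T(θ))` equals `-τ ∑_{t=0}^{T-1} (D_θ f(x_t(θ), θ))* p_{t+1}`, where the discrete
co-state satisfies `p_T = -∇Φ(x_T(θ))` and `p_t = p_{t+1} + τ (D_x f(x_t(θ), θ))* p_{t+1}`. -/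
theorem discrete_msa_gradient {n m : ℕ}
    (f : EuclideanSpace ℝ (Fin n) → EuclideanSpace ℝ (Fin m) → EuclideanSpace ℝ (Fin n))
    (Φ : EuclideanSpace ℝ (Fin n) → ℝ)
    (hf : ContDiff ℝ 1 (fun q : EuclideanSpace ℝ (Fin n) × EuclideanSpace ℝ (Fin m) => f q.1 q.2))
    (hΦ : ContDiff ℝ 1 Φ)
    (τ : ℝ) (hτ : 0 < τ) (x₀ : EuclideanSpace ℝ (Fin n)) (T : ℕ)
    (θ : EuclideanSpace ℝ (Fin m))
    (p : ℕ → EuclideanSpace ℝ (Fin n))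
    (hpT : p T = -(gradient Φ (eulerTraj f τ x₀ θ T)))
    (hp : ∀ t < T, p t = p (t + 1) +
      τ • (ContinuousLinearMap.adjoint
        (fderiv ℝ (fun y => f y θ) (eulerTraj f τ x₀ θ t)) (p (t + 1)))) :
    HasGradientAt (fun ϑ => Φ (eulerTraj f τ x₀ ϑ T))
      (-(τ • ∑ t ∈ Finset.range T,
        ContinuousLinearMap.adjoint (fderiv ℝ (f (eulerTraj f τ x₀ θ t)) θ) (p (t + 1)))) θ := by
  set F : EuclideanSpace ℝ (Fin n) × EuclideanSpace ℝ (Fin m) → EuclideanSpace ℝ (Fin n) :=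
    fun q => f q.1 q.2 with hFdef
  set x : ℕ → EuclideanSpace ℝ (Fin n) := eulerTraj f τ x₀ θ with hxdef
  set A : ℕ → (EuclideanSpace ℝ (Fin m) →L[ℝ] EuclideanSpace ℝ (Fin n)) :=
    trajDeriv f τ x₀ θ with hAdef
  have hFd : ∀ q, HasFDerivAt F (fderiv ℝ F q) q :=
    fun q => ((hf.differentiable one_ne_zero) q).hasFDerivAt
  -- partial derivatives
  have hDx : ∀ t, fderiv ℝ (fun y => f y θ) (x t)
      = (fderiv ℝ F (x t, θ)).comp (ContinuousLinearMap.inl ℝ _ _) := by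
    intro t
    exact ((hFd (x t, θ)).comp (x t) (hasFDerivAt_prodMk_left (𝕜 := ℝ) (x t) θ)).fderiv
  have hDθ : ∀ t, fderiv ℝ (f (x t)) θ
      = (fderiv ℝ F (x t, θ)).comp (ContinuousLinearMap.inr ℝ _ _) := by
    intro t
    exact ((hFd (x t, θ)).comp θ (hasFDerivAt_prodMk_right (x t) θ)).fderiv
  -- key identity by induction
  have key : ∀ t ≤ T, ContinuousLinearMap.adjoint (A t) (p t)
      = τ • ∑ s ∈ Finset.range t,
          ContinuousLinearMap.adjoint (fderiv ℝ (f (x s)) θ) (p (s + 1)) := by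
    intro t ht
    induction t with
    | zero => simp [hAdef, trajDeriv]
    | succ t ih =>
      rw [Finset.sum_range_succ, smul_add, ← ih (le_of_lt ht)]
      apply ext_inner_right ℝ
      intro v
      have hsplit : ((A t) v, v) = ((A t) v, (0 : EuclideanSpace ℝ (Fin m)))
          + ((0 : EuclideanSpace ℝ (Fin n)), v) := by simp
      rw [hp t ht]
      simp only [hAdef, trajDeriv, ContinuousLinearMap.adjoint_inner_left,
        ContinuousLinearMap.add_apply, ContinuousLinearMap.smul_apply,
        ContinuousLinearMap.comp_apply, ContinuousLinearMap.prod_apply,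
        ContinuousLinearMap.coe_id', id_eq, inner_add_left, inner_add_right,
        real_inner_smul_left, real_inner_smul_right, hDx, hDθ,
        ContinuousLinearMap.inl_apply, ContinuousLinearMap.inr_apply]
      rw [hsplit, map_add]
      simp only [inner_add_right]
      ring
  -- assemble
  have hT := hasFDerivAt_eulerTraj f hf τ x₀ θ T
  have hΦg : HasFDerivAt Φ
      (InnerProductSpace.toDual ℝ _ (gradient Φ (x T))) (x T) := by
    have := ((hΦ.differentiable one_ne_zero) (x T)).hasGradientAt
    exact this.hasFDerivAt
  have hcomp : HasFDerivAt (fun ϑ => Φ (eulerTraj f τ x₀ ϑ T))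
      ((InnerProductSpace.toDual ℝ _ (gradient Φ (x T))).comp (A T)) θ :=
    hΦg.comp θ hT
  rw [hasGradientAt_iff_hasFDerivAt]
  have hk := key T le_rfl
  rw [hpT, map_neg] at hk
  have hgrad : -(τ • ∑ t ∈ Finset.range T,
      ContinuousLinearMap.adjoint (fderiv ℝ (f (eulerTraj f τ x₀ θ t)) θ) (p (t + 1)))
      = ContinuousLinearMap.adjoint (A T) (gradient Φ (x T)) := by
    rw [← hk, neg_neg]
  rw [hgrad]
  have htd : InnerProductSpace.toDual ℝ _ (ContinuousLinearMap.adjoint (A T) (gradient Φ (x T)))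
      = (InnerProductSpace.toDual ℝ _ (gradient Φ (x T))).comp (A T) := by
    ext v
    simp [ContinuousLinearMap.adjoint_inner_left]
  rw [htd]
  exact hcomp
end
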